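/- Let f : ℝⁿ → ℝⁿ, let n ∈ ℝⁿ be nonzero, let a ∈ ℝ, let γ > 0, and set h(x) = ⟨n, x⟩ + a. Define the control law u*(x) = (max(0, −(⟨n, f(x)⟩ + γ·h(x))) / ‖n‖²) · n. Then ⟨n, f(x) + u*(x)⟩ ≥ −γ·h(x) for all x ∈ ℝⁿ, and consequently every differentiable curve x : [0,∞) → ℝⁿ satisfying x'(t) = f(x(t)) + u*(x(t)) for all t ≥ 0 with h(x(0)) ≥ 0 satisfies h(x(t)) ≥ 0 for all t ≥ 0. -/

import Mathlib

open RealInnerProductSpace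

/-- For the linear ZCBF h(x) = ⟨n, x⟩ + a with n ≠ 0 and γ > 0, the analytic
QP solution u*(x) = (max(0, −(⟨n, f(x)⟩ + γ·h(x))) / ‖n‖²)·n satisfies the barrier
constraint ⟨n, f(x) + u*(x)⟩ ≥ −γ·h(x) everywhere, hence every solution of
ẋ = f(x) + u*(x) starting in the half-space {h ≥ 0} stays in it. -/
theorem linear_zcbf_controller (d : ℕ)
    (f : EuclideanSpace ℝ (Fin d) → EuclideanSpace ℝ (Fin d))
    (nv : EuclideanSpace ℝ (Fin d)) (hnv : nv ≠ 0) (a γ : ℝ) (hγ : 0 < γ)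
    (h : EuclideanSpace ℝ (Fin d) → ℝ)
    (hdef : ∀ x : EuclideanSpace ℝ (Fin d), h x = ⟪nv, x⟫ + a)
    (u : EuclideanSpace ℝ (Fin d) → EuclideanSpace ℝ (Fin d))
    (udef : ∀ x : EuclideanSpace ℝ (Fin d),
      u x = (max 0 (-(⟪nv, f x⟫ + γ * h x)) / ‖nv‖ ^ 2) • nv) :
    (∀ x : EuclideanSpace ℝ (Fin d), ⟪nv, f x + u x⟫ ≥ -γ * h x) ∧
    ∀ x : ℝ → EuclideanSpace ℝ (Fin d),
      (∀ t : ℝ, 0 ≤ t → HasDerivAt x (f (x t) + u (x t)) t) →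
      0 ≤ h (x 0) →
      ∀ t : ℝ, 0 ≤ t → 0 ≤ h (x t) := by
  have hn2 : (0:ℝ) < ‖nv‖ ^ 2 := pow_pos (norm_pos_iff.mpr hnv) 2
  have key : ∀ x : EuclideanSpace ℝ (Fin d), ⟪nv, f x + u x⟫ ≥ -γ * h x := by
    intro x
    have : ⟪nv, f x + u x⟫ = ⟪nv, f x⟫ + max 0 (-(⟪nv, f x⟫ + γ * h x)) := by
      rw [inner_add_right, udef x, real_inner_smul_right, real_inner_self_eq_norm_sq]
      field_simp
    rw [this]
    rcases le_or_gt 0 (-(⟪nv, f x⟫ + γ * h x)) with hc | hc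
    · rw [max_eq_right hc]; linarith
    · rw [max_eq_left hc.le]; linarith
  refine ⟨key, ?_⟩
  intro x hx h0 t ht
  -- g t = h (x t), F t = exp (γ t) * g t is monotone on [0, ∞)
  set g : ℝ → ℝ := fun t => h (x t) with hg
  set F : ℝ → ℝ := fun t => Real.exp (γ * t) * g t with hF
  have hgd : ∀ s : ℝ, 0 ≤ s → HasDerivAt g (⟪nv, f (x s) + u (x s)⟫) s := by
    intro s hs
    have h1 : HasDerivAt (fun t => ⟪nv, x t⟫ + a) (⟪nv, f (x s) + u (x s)⟫) s := by
      have := ((hasDerivAt_const s nv).inner ℝ (hx s hs))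
      simpa using this.add_const a
    convert h1 using 1
    ext t; simp [hg, hdef]
  have hFd : ∀ s : ℝ, 0 ≤ s →
      HasDerivAt F (Real.exp (γ * s) * (γ * g s + ⟪nv, f (x s) + u (x s)⟫)) s := by
    intro s hs
    have he : HasDerivAt (fun t => Real.exp (γ * t)) (γ * Real.exp (γ * s)) s := by
      exact ((Real.hasDerivAt_exp (γ * s)).comp s
        ((hasDerivAt_id s).const_mul γ)).congr_deriv (by ring)
    have := he.mul (hgd s hs)
    refine this.congr_deriv ?_
    ring
  have hmono : MonotoneOn F (Set.Ici (0:ℝ)) := by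
    apply monotoneOn_of_deriv_nonneg (convex_Ici 0)
    · intro s hs
      exact (hFd s hs).continuousAt.continuousWithinAt
    · intro s hs
      rw [interior_Ici] at hs
      exact (hFd s (le_of_lt hs)).differentiableAt.differentiableWithinAt
    · intro s hs
      rw [interior_Ici] at hs
      rw [(hFd s hs.le).deriv]
      have := key (x s)
      have hge : γ * g s + ⟪nv, f (x s) + u (x s)⟫ ≥ 0 := by
        simp only [hg]; linarith
      positivity
  have hF0 : 0 ≤ F 0 := by
    simp only [hF, mul_zero, Real.exp_zero, one_mul]
    exact h0
  have hFt : 0 ≤ F t := le_trans hF0 (hmono Set.self_mem_Ici ht ht)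
  have : 0 ≤ Real.exp (γ * t) * g t := hFt
  nlinarith [Real.exp_pos (γ * t)]
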